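/- arXiv:1612.06307 — 2 statements merged into one kernel-verified Lean document; each statement's English description precedes it below -/
import Mathlib

section
/- There exists a constant C > 0 (depending only on m) such that for every z ∈ ℂ, ∫₀¹ |z|·(1 + ψ_m'(t|z|))·exp(ψ_m(t|z|)) dt ≤ C·exp(ψ_m(z)), where ψ_m(r) = r²/2 − m·log(1+r) for r ≥ 0 and ψ_m' denotes its derivative. -/
open MeasureTheory

/-- ψ_m as a function of the radius: ψ_m(r) = r²/2 − m·log(1+r). -/
noncomputable def psiR (m : ℕ) (r : ℝ) : ℝ := r ^ 2 / 2 - m * Real.log (1 + r)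

/-- ψ_m'(r) = r − m/(1+r). -/
noncomputable def psiR' (m : ℕ) (r : ℝ) : ℝ := r - m / (1 + r)

lemma expPsi_hasDerivAt (m : ℕ) {s : ℝ} (hs : 0 ≤ s) :
    HasDerivAt (fun x => Real.exp (psiR m x)) (psiR' m s * Real.exp (psiR m s)) s := by
  have h1 : (1 : ℝ) + s ≠ 0 := by positivity
  have hpow : HasDerivAt (fun x : ℝ => x ^ 2 / 2) s s := by
    have := (hasDerivAt_pow 2 s).div_const 2
    simpa using this
  have hlog : HasDerivAt (fun x : ℝ => Real.log (1 + x)) ((1 + s)⁻¹) s := by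
    have h := ((hasDerivAt_id s).const_add 1).log h1
    simpa using h
  have hpsi : HasDerivAt (fun x => psiR m x) (psiR' m s) s := by
    have := hpow.sub (hlog.const_mul (m : ℝ))
    exact this.congr_deriv (by simp [psiR', div_eq_mul_inv])
  simpa [mul_comm] using hpsi.exp

lemma contOn_psiStuff (m : ℕ) :
    ContinuousOn (fun s => Real.exp (psiR m s)) (Set.Ici (0 : ℝ)) ∧
    ContinuousOn (fun s => psiR' m s) (Set.Ici (0 : ℝ)) := by
  have hne : ∀ s ∈ Set.Ici (0 : ℝ), (1 : ℝ) + s ≠ 0 := fun s hs => by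
    have : (0:ℝ) ≤ s := hs; positivity
  have h1 : ContinuousOn (fun s : ℝ => 1 + s) (Set.Ici (0:ℝ)) :=
    (continuous_const.add continuous_id).continuousOn
  constructor
  · apply Real.continuous_exp.comp_continuousOn
    apply ContinuousOn.sub
    · exact (continuous_pow 2).continuousOn.div_const 2
    · exact continuousOn_const.mul (Real.continuousOn_log.comp h1
        (fun s hs => hne s hs))
  · exact continuousOn_id.sub (continuousOn_const.div h1 hne)


/-- ∃ C > 0 (depending only on m) such that for every z ∈ ℂ,
∫₀¹ |z|·(1 + ψ_m'(t|z|))·exp(ψ_m(t|z|)) dt ≤ C·exp(ψ_m(|z|)). -/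
theorem stmt_1 (m : ℕ) :
    ∃ C > (0 : ℝ), ∀ z : ℂ,
      (∫ t in (0:ℝ)..1,
          ‖z‖ * (1 + psiR' m (t * ‖z‖)) *
            Real.exp (psiR m (t * ‖z‖)))
        ≤ C * Real.exp (psiR m (‖z‖)) := by
  -- constants
  set a : ℝ := (m : ℝ) + 1 with ha
  set K : ℝ := a * Real.exp (a ^ 2 / 2) with hK
  set C : ℝ := K * Real.exp ((m:ℝ) ^ 2 / 2) + 2 with hC
  have hKpos : 0 < K := by positivity
  have hCpos : 0 < C := by positivity
  refine ⟨C, hCpos, fun z => ?_⟩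
  set r : ℝ := ‖z‖ with hr
  have hr0 : 0 ≤ r := norm_nonneg z
  -- basic facts about psiR
  have hpsi_lb : ∀ x : ℝ, 0 ≤ x → -((m:ℝ)^2/2) ≤ psiR m x := by
    intro x hx
    have hlog : Real.log (1 + x) ≤ x := by
      have := Real.log_le_sub_one_of_pos (x := 1 + x) (by positivity)
      linarith
    have hm : (0:ℝ) ≤ (m:ℝ) := Nat.cast_nonneg m
    have : psiR m x = x^2/2 - m * Real.log (1+x) := rfl
    nlinarith [sq_nonneg (x - (m:ℝ)), mul_le_mul_of_nonneg_left hlog hm]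
  have hpsi_ub : ∀ x : ℝ, 0 ≤ x → psiR m x ≤ x ^ 2 / 2 := by
    intro x hx
    have hlog : (0:ℝ) ≤ Real.log (1 + x) := Real.log_nonneg (by linarith)
    have hm : (0:ℝ) ≤ (m:ℝ) := Nat.cast_nonneg m
    have : psiR m x = x^2/2 - m * Real.log (1+x) := rfl
    nlinarith
  -- reduce to the key integral inequality in the radial variable
  have key : ∀ R : ℝ, 0 ≤ R →
      (∫ s in (0:ℝ)..R, (1 + psiR' m s) * Real.exp (psiR m s))
        ≤ C * Real.exp (psiR m R) := by
    intro R hR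
    obtain ⟨hce, hcd⟩ := contOn_psiStuff m
    have hsub : ∀ x y : ℝ, 0 ≤ x → x ≤ y → Set.uIcc x y ⊆ Set.Ici (0:ℝ) := by
      intro x y hx hxy
      rw [Set.uIcc_of_le hxy]
      exact fun s hs => le_trans hx hs.1
    -- integrability pieces
    have int_exp : ∀ x y : ℝ, 0 ≤ x → x ≤ y →
        IntervalIntegrable (fun s => Real.exp (psiR m s)) volume x y := by
      intro x y hx hxy
      exact (hce.mono (hsub x y hx hxy)).intervalIntegrable
    have int_dexp : ∀ x y : ℝ, 0 ≤ x → x ≤ y →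
        IntervalIntegrable (fun s => psiR' m s * Real.exp (psiR m s)) volume x y := by
      intro x y hx hxy
      exact (((hcd.mono (hsub x y hx hxy)).mul
        (hce.mono (hsub x y hx hxy)))).intervalIntegrable
    -- FTC on [x,y] ⊆ [0,∞)
    have ftc : ∀ x y : ℝ, 0 ≤ x → x ≤ y →
        (∫ s in x..y, psiR' m s * Real.exp (psiR m s))
          = Real.exp (psiR m y) - Real.exp (psiR m x) := by
      intro x y hx hxy
      apply intervalIntegral.integral_eq_sub_of_hasDerivAt
      · intro s hs
        exact expPsi_hasDerivAt m (hsub x y hx hxy hs)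
      · exact int_dexp x y hx hxy
    -- split integrand
    have hsplit : (∫ s in (0:ℝ)..R, (1 + psiR' m s) * Real.exp (psiR m s))
        = (∫ s in (0:ℝ)..R, Real.exp (psiR m s))
          + ∫ s in (0:ℝ)..R, psiR' m s * Real.exp (psiR m s) := by
      rw [← intervalIntegral.integral_add (int_exp 0 R le_rfl hR) (int_dexp 0 R le_rfl hR)]
      congr 1
      funext s
      ring
    -- bound for the pure exponential part
    have expR_lb : Real.exp (-((m:ℝ)^2/2)) ≤ Real.exp (psiR m R) :=
      Real.exp_le_exp.2 (hpsi_lb R hR)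
    have hJ : (∫ s in (0:ℝ)..R, Real.exp (psiR m s))
        ≤ (K * Real.exp ((m:ℝ)^2/2) + 1) * Real.exp (psiR m R) := by
      have hKbd : K ≤ K * Real.exp ((m:ℝ)^2/2) * Real.exp (psiR m R) := by
        have h1 : (1:ℝ) ≤ Real.exp ((m:ℝ)^2/2) * Real.exp (psiR m R) := by
          rw [← Real.exp_add]
          apply Real.one_le_exp
          have := hpsi_lb R hR
          linarith
        nlinarith
      have hJsmall : ∀ b : ℝ, 0 ≤ b → b ≤ a →
          (∫ s in (0:ℝ)..b, Real.exp (psiR m s)) ≤ K := by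
        intro b hb hba
        have hmono : (∫ s in (0:ℝ)..b, Real.exp (psiR m s))
            ≤ ∫ _ in (0:ℝ)..b, Real.exp (a^2/2) := by
          apply intervalIntegral.integral_mono_on hb (int_exp 0 b le_rfl hb)
            intervalIntegrable_const
          intro s hs
          apply Real.exp_le_exp.2
          refine le_trans (hpsi_ub s hs.1) ?_
          have : s ≤ a := le_trans hs.2 hba
          nlinarith [hs.1]
        rw [intervalIntegral.integral_const, smul_eq_mul] at hmono
        refine le_trans hmono ?_
        have hea : (0:ℝ) < Real.exp (a^2/2) := Real.exp_pos _
        simp only [sub_zero]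
        nlinarith
      rcases le_or_gt R a with hRa | hRa
      · calc (∫ s in (0:ℝ)..R, Real.exp (psiR m s)) ≤ K := hJsmall R hR hRa
          _ ≤ K * Real.exp ((m:ℝ)^2/2) * Real.exp (psiR m R) := hKbd
          _ ≤ (K * Real.exp ((m:ℝ)^2/2) + 1) * Real.exp (psiR m R) := by
              have := Real.exp_pos (psiR m R); nlinarith
      · -- split at a
        have ha0 : (0:ℝ) ≤ a := by positivity
        have hsplit2 : (∫ s in (0:ℝ)..R, Real.exp (psiR m s))
            = (∫ s in (0:ℝ)..a, Real.exp (psiR m s))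
              + ∫ s in a..R, Real.exp (psiR m s) := by
          rw [intervalIntegral.integral_add_adjacent_intervals
            (int_exp 0 a le_rfl ha0) (int_exp a R ha0 hRa.le)]
        have htail : (∫ s in a..R, Real.exp (psiR m s)) ≤ Real.exp (psiR m R) := by
          have hcmp : (∫ s in a..R, Real.exp (psiR m s))
              ≤ ∫ s in a..R, psiR' m s * Real.exp (psiR m s) := by
            apply intervalIntegral.integral_mono_on hRa.le (int_exp a R ha0 hRa.le)
              (int_dexp a R ha0 hRa.le)
            intro s hs
            have hs0 : (0:ℝ) ≤ s := le_trans ha0 hs.1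
            have h1s : (0:ℝ) < 1 + s := by linarith
            have hpsi'ge : (1:ℝ) ≤ psiR' m s := by
              have hdiv : (m:ℝ) / (1 + s) ≤ (m:ℝ) := by
                rw [div_le_iff₀ h1s]
                nlinarith [Nat.cast_nonneg (α := ℝ) m]
              have : a ≤ s := hs.1
              simp only [psiR']
              rw [ha] at this
              linarith
            nlinarith [Real.exp_pos (psiR m s)]
          rw [ftc a R ha0 hRa.le] at hcmp
          have := Real.exp_pos (psiR m a)
          linarith
        rw [hsplit2]
        have h1 : (∫ s in (0:ℝ)..a, Real.exp (psiR m s)) ≤ K := hJsmall a ha0 le_rfl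
        calc (∫ s in (0:ℝ)..a, Real.exp (psiR m s)) + ∫ s in a..R, Real.exp (psiR m s)
            ≤ K + Real.exp (psiR m R) := add_le_add h1 htail
          _ ≤ K * Real.exp ((m:ℝ)^2/2) * Real.exp (psiR m R) + Real.exp (psiR m R) := by
              linarith [hKbd]
          _ = (K * Real.exp ((m:ℝ)^2/2) + 1) * Real.exp (psiR m R) := by ring
    -- the derivative part
    have hA : (∫ s in (0:ℝ)..R, psiR' m s * Real.exp (psiR m s)) ≤ Real.exp (psiR m R) := by
      rw [ftc 0 R le_rfl hR]
      have := Real.exp_pos (psiR m 0)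
      linarith
    rw [hsplit, hC]
    nlinarith [hJ, hA]
  -- substitution t ↦ t * r
  rcases eq_or_lt_of_le hr0 with hr0' | hrpos
  · have h0 : (∫ t in (0:ℝ)..1,
        r * (1 + psiR' m (t * r)) * Real.exp (psiR m (t * r))) = 0 := by
      simp [← hr0']
    rw [← hr] at *
    rw [h0]
    positivity
  · have subst : (∫ t in (0:ℝ)..1,
          r * (1 + psiR' m (t * r)) * Real.exp (psiR m (t * r)))
        = ∫ s in (0:ℝ)..r, (1 + psiR' m s) * Real.exp (psiR m s) := by
      have := intervalIntegral.integral_comp_mul_right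
        (a := (0:ℝ)) (b := 1) (fun s => (1 + psiR' m s) * Real.exp (psiR m s))
        (ne_of_gt hrpos)
      rw [zero_mul, one_mul] at this
      calc (∫ t in (0:ℝ)..1, r * (1 + psiR' m (t * r)) * Real.exp (psiR m (t * r)))
          = r * ∫ t in (0:ℝ)..1, (1 + psiR' m (t * r)) * Real.exp (psiR m (t * r)) := by
            rw [← intervalIntegral.integral_const_mul]
            congr 1; funext t; ring
        _ = _ := by rw [this, smul_eq_mul]; field_simp
    rw [← hr] at *
    rw [subst]
    exact key r hr0
end

section
/- Let g be an entire function and 0 < p < ∞ such that ∫_ℂ |g'(z)|^p·(1 + ψ_m'(|z|))^{−p} dA(z) < ∞. If p > 2 then g' is constant, and if 0 < p ≤ 2 then g' ≡ 0 (g is constant). -/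
open MeasureTheory Metric Set Filter Bornology
open scoped Real Topology ENNReal NNReal

/-- ψ_m'(r) = r − m/(1+r). -/
noncomputable def psi' (m : ℕ) (r : ℝ) : ℝ := r - m / (1 + r)

namespace Stmt11Aux

variable {f : ℂ → ℂ}

lemma integrableOn_closedBall {g : ℂ → ℝ} (hg : Continuous g) (a : ℂ) (r : ℝ) :
    IntegrableOn g (closedBall a r) :=
  hg.continuousOn.integrableOn_compact (isCompact_closedBall a r)

lemma vol_ball_toReal (a : ℂ) {R : ℝ} (hR : 0 < R) :
    (volume (ball a R)).toReal = Real.pi * R^2 := by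
  rw [Complex.volume_ball, ENNReal.toReal_mul, ENNReal.toReal_pow,
    ENNReal.toReal_ofReal hR.le, ENNReal.coe_toReal, NNReal.coe_real_pi]
  ring

lemma weight_bounds (m : ℕ) {t : ℝ} (h1 : (m:ℝ) ≤ t) (h0 : 0 ≤ t) :
    t ≤ 1 + psi' m t ∧ 1 + psi' m t ≤ 1 + t := by
  unfold psi'
  constructor
  · have h2 : (m:ℝ)/(1+t) ≤ 1 := by
      rw [div_le_one (by linarith)]; linarith
    linarith
  · have h3 : 0 ≤ (m:ℝ)/(1+t) := by positivity
    linarith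
lemma circle_eq (hf : Differentiable ℂ f) (c : ℂ) {r : ℝ} (hr : 0 < r) :
    (∫ θ in (0:ℝ)..(2*Real.pi), f (circleMap c r θ)) = (2*Real.pi : ℝ) • f c := by
  have h := (hf.diffContOnCl (s := ball c r)).circleIntegral_sub_inv_smul (mem_ball_self hr)
  have h2 : (∮ z in C(c, r), (z - c)⁻¹ • f z)
      = ∫ θ in (0:ℝ)..(2*Real.pi), Complex.I • f (circleMap c r θ) := by
    rw [circleIntegral]
    congr 1
    ext θ
    rw [deriv_circleMap, circleMap_sub_center, smul_smul]
    have hne : circleMap 0 r θ ≠ 0 := by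
      simp [circleMap, Complex.exp_ne_zero, hr.ne']
    congr 1
    rw [mul_comm, ← mul_assoc, inv_mul_cancel₀ hne, one_mul]
  rw [h2, intervalIntegral.integral_smul] at h
  have hI : (Complex.I : ℂ) ≠ 0 := Complex.I_ne_zero
  have : (2 * ↑Real.pi * Complex.I) • f c = Complex.I • ((2*Real.pi : ℝ) • f c) := by
    simp [smul_smul, Complex.real_smul]
    ring
  rw [this] at h
  exact smul_right_injective ℂ hI h

lemma circle_submean (hf : Differentiable ℂ f) (c : ℂ) {r : ℝ} (hr : 0 < r) :
    2 * Real.pi * ‖f c‖ ≤ ∫ θ in (0:ℝ)..(2*Real.pi), ‖f (circleMap c r θ)‖ := by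
  have h1 := circle_eq hf c hr
  have h2 : 2 * Real.pi * ‖f c‖ = ‖(2*Real.pi : ℝ) • f c‖ := by
    rw [norm_smul, Real.norm_eq_abs, abs_of_nonneg (by positivity)]
  rw [h2, ← h1]
  exact intervalIntegral.norm_integral_le_integral_norm (by positivity)
lemma area_submean (hf : Differentiable ℂ f) (c : ℂ) {s : ℝ} (hs : 0 < s) :
    Real.pi * s^2 * ‖f c‖ ≤ ∫ z in ball c s, ‖f z‖ := by
  -- translate to center 0
  have htrans : (∫ z in ball (0:ℂ) s, ‖f (c + z)‖) = ∫ z in ball c s, ‖f z‖ := by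
    have hpre : ball (0:ℂ) s = (fun z => c + z) ⁻¹' (ball c s) := by
      ext z; simp [dist_eq_norm]
    rw [hpre]
    exact (measurePreserving_add_left volume c).setIntegral_preimage_emb
      (measurableEmbedding_addLeft c) (fun z => ‖f z‖) (ball c s)
  rw [← htrans]
  -- indicator
  set F : ℂ → ℝ := (ball (0:ℂ) s).indicator (fun z => ‖f (c + z)‖) with hF
  have hind : (∫ z in ball (0:ℂ) s, ‖f (c + z)‖) = ∫ z, F z := by
    rw [hF, integral_indicator measurableSet_ball]
  rw [hind, ← Complex.integral_comp_polarCoord_symm F]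
  -- restrict to the product set
  set S : Set (ℝ × ℝ) := Ioo (0:ℝ) s ×ˢ Ioo (-Real.pi) Real.pi with hSdef
  have hSsub : S ⊆ polarCoord.target := by
    exact prod_mono (fun x hx => hx.1) le_rfl
  have hrestrict : (∫ p in polarCoord.target, p.1 • F (Complex.polarCoord.symm p))
      = ∫ p in S, p.1 • F (Complex.polarCoord.symm p) := by
    apply setIntegral_eq_of_subset_of_ae_diff_eq_zero
      (polarCoord.open_target.measurableSet.nullMeasurableSet) hSsub
    refine Eventually.of_forall fun p hp => ?_
    have h1 : 0 < p.1 := by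
      have := hp.1; exact this.1
    have h2 : s ≤ p.1 := by
      by_contra hlt
      push_neg at hlt
      refine hp.2 ?_
      exact ⟨⟨h1, hlt⟩, hp.1.2⟩
    have : F (Complex.polarCoord.symm p) = 0 := by
      apply indicator_of_notMem
      rw [mem_ball_zero_iff]
      push_neg
      rw [Complex.norm_polarCoord_symm, abs_of_pos h1]
      exact h2
    rw [this, smul_zero]
  rw [hrestrict]
  -- on S, rewrite the integrand
  set G : ℝ × ℝ → ℝ := fun q => q.1 * ‖f (circleMap c q.1 q.2)‖ with hG
  have hGcont : Continuous G := by
    apply continuous_fst.mul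
    apply continuous_norm.comp
    apply hf.continuous.comp
    unfold circleMap
    fun_prop
  have hcongr : (∫ p in S, p.1 • F (Complex.polarCoord.symm p)) = ∫ p in S, G p := by
    apply setIntegral_congr_fun (measurableSet_Ioo.prod measurableSet_Ioo)
    intro p hp
    have h1 : p.1 ∈ Ioo (0:ℝ) s := hp.1
    have hmem : Complex.polarCoord.symm p ∈ ball (0:ℂ) s := by
      rw [mem_ball_zero_iff, Complex.norm_polarCoord_symm,
        abs_of_pos h1.1]
      exact h1.2
    have hcm : c + Complex.polarCoord.symm p = circleMap c p.1 p.2 := by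
      rw [Complex.polarCoord_symm_apply]
      simp [circleMap, Complex.exp_mul_I]
    rw [hF]
    simp only [indicator_of_mem hmem, smul_eq_mul, hG, hcm]
  rw [hcongr]
  -- integrability on S
  have hGint : IntegrableOn G S := by
    apply (hGcont.continuousOn.integrableOn_compact
      ((isCompact_Icc (a := (0:ℝ)) (b := s)).prod
        (isCompact_Icc (a := -Real.pi) (b := Real.pi)))).mono_set
    exact prod_mono Ioo_subset_Icc_self Ioo_subset_Icc_self
  -- Fubini
  have hGint' : Integrable G ((volume.restrict (Ioo (0:ℝ) s)).prod
      (volume.restrict (Ioo (-Real.pi) Real.pi))) := by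
    rw [Measure.prod_restrict, ← Measure.volume_eq_prod]
    exact hGint
  have hprodmeas : (∫ p in S, G p)
      = ∫ r in Ioo (0:ℝ) s, ∫ θ in Ioo (-Real.pi) Real.pi, G (r, θ) := by
    rw [hSdef, Measure.volume_eq_prod]
    exact setIntegral_prod G (by rwa [Measure.volume_eq_prod] at hGint)
  rw [hprodmeas]
  -- lower bound for inner integral
  have hinner : ∀ r ∈ Ioo (0:ℝ) s,
      2 * Real.pi * ‖f c‖ * r ≤ ∫ θ in Ioo (-Real.pi) Real.pi, G (r, θ) := by
    intro r hr
    have h0 : (∫ θ in Ioo (-Real.pi) Real.pi, G (r, θ))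
        = r * ∫ θ in Ioo (-Real.pi) Real.pi, ‖f (circleMap c r θ)‖ := by
      rw [hG]; exact MeasureTheory.integral_const_mul r _
    have hper : (∫ θ in Ioo (-Real.pi) Real.pi, ‖f (circleMap c r θ)‖)
        = ∫ θ in (0:ℝ)..(2*Real.pi), ‖f (circleMap c r θ)‖ := by
      rw [← integral_Ioc_eq_integral_Ioo,
        ← intervalIntegral.integral_of_le (by linarith [Real.pi_pos] : -Real.pi ≤ Real.pi)]
      have hper2 : Function.Periodic (fun θ => ‖f (circleMap c r θ)‖) (2*Real.pi) :=
        (periodic_circleMap c r).comp fun z => ‖f z‖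
      have := hper2.intervalIntegral_add_eq (-Real.pi) 0
      simp only [zero_add] at this
      rw [← this]
      norm_num
      ring_nf
    rw [h0, hper]
    calc 2 * Real.pi * ‖f c‖ * r = r * (2 * Real.pi * ‖f c‖) := by ring
      _ ≤ r * ∫ θ in (0:ℝ)..(2*Real.pi), ‖f (circleMap c r θ)‖ := by
          apply mul_le_mul_of_nonneg_left (circle_submean hf c hr.1) hr.1.le
  -- integrate the lower bound
  have houter : (∫ r in Ioo (0:ℝ) s, 2 * Real.pi * ‖f c‖ * r)
      ≤ ∫ r in Ioo (0:ℝ) s, ∫ θ in Ioo (-Real.pi) Real.pi, G (r, θ) := by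
    apply setIntegral_mono_on
    · exact ((continuous_const.mul continuous_id).integrableOn_Icc (a := (0:ℝ)) (b := s)).mono_set
        Ioo_subset_Icc_self
    · exact hGint'.integral_prod_left
    · exact measurableSet_Ioo
    · exact hinner
  refine le_trans ?_ houter
  have : (∫ r in Ioo (0:ℝ) s, 2 * Real.pi * ‖f c‖ * r)
      = 2 * Real.pi * ‖f c‖ * (s^2/2) := by
    rw [MeasureTheory.integral_const_mul (2 * Real.pi * ‖f c‖) (fun r : ℝ => r)]
    congr 1
    rw [← integral_Ioc_eq_integral_Ioo,
      ← intervalIntegral.integral_of_le hs.le]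
    simpa using intervalIntegral.integral_id (a := (0:ℝ)) (b := s)
  rw [this]
  ring_nf
  exact le_refl _

lemma core_q (hf : Differentiable ℂ f) {q : ℝ} (hq0 : 0 < q) (hq1 : q ≤ 1) (n : ℕ) (hn : (2:ℝ) ≤ n * q)
    (a : ℂ) {R : ℝ} (hR : 0 < R) :
    ‖f a‖ ^ q * (Real.pi * R ^ 2) ≤ 2 ^ n * ∫ z in closedBall a (2*R), ‖f z‖ ^ q := by
  have hn2 : (2:ℝ) ≤ (n:ℝ) := by nlinarith [Nat.cast_nonneg (α := ℝ) n]
  have hnne : n ≠ 0 := by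
    intro h; rw [h] at hn2; norm_num at hn2
  set K := closedBall a (2*R) with hK
  have haK : a ∈ K := by
    simp only [hK, mem_closedBall, dist_self]; positivity
  set ψ : ℂ → ℝ := fun z => ‖f z‖ * (2*R - dist z a)^n with hψ
  have hψcont : ContinuousOn ψ K := by
    apply Continuous.continuousOn
    apply hf.continuous.norm.mul
    exact (continuous_const.sub (continuous_id.dist continuous_const)).pow n
  obtain ⟨z0, hz0K, hz0max⟩ := (isCompact_closedBall a (2*R)).exists_isMaxOn ⟨a, haK⟩ hψcont
  set I := ∫ z in K, ‖f z‖ ^ q with hI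
  have hfq_cont : Continuous fun z : ℂ => ‖f z‖ ^ q :=
    hf.continuous.norm.rpow_const (fun z => Or.inr hq0.le)
  have hIint : IntegrableOn (fun z => ‖f z‖ ^ q) K := integrableOn_closedBall hfq_cont a _
  have hInn : 0 ≤ I := setIntegral_nonneg measurableSet_closedBall
    (fun z _ => Real.rpow_nonneg (norm_nonneg _) q)
  have hRHSnn : (0:ℝ) ≤ 2 ^ n * I := mul_nonneg (by positivity) hInn
  have hψa : ψ a ≤ ψ z0 := hz0max haK
  have hψaval : ψ a = ‖f a‖ * (2*R)^n := by simp [hψ, dist_self]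
  rcases le_or_gt (ψ z0) 0 with hψ0 | hψ0
  · -- trivial case : f a = 0
    have h2 : (0:ℝ) < (2*R)^n := by positivity
    have h3 : ‖f a‖ ≤ 0 := by
      by_contra hc
      push_neg at hc
      have : 0 < ψ a := by rw [hψaval]; positivity
      linarith
    have : ‖f a‖ = 0 := le_antisymm h3 (norm_nonneg _)
    rw [this, Real.zero_rpow hq0.ne', zero_mul]
    exact hRHSnn
  · have hXpos : 0 < ‖f z0‖ := by
      rcases (norm_nonneg (f z0)).lt_or_eq with h | h
      · exact h
      · exfalso
        have hz : ψ z0 = 0 := by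
          have h9 : ‖f z0‖ = 0 := h.symm
          show ψ z0 = 0
          simp only [hψ]
          rw [h9, zero_mul]
        linarith
    set X := ‖f z0‖ with hX
    have ht0nn : (0:ℝ) ≤ dist z0 a := dist_nonneg
    have ht02R : dist z0 a ≤ 2*R := mem_closedBall.mp hz0K
    set t0 := dist z0 a with ht0
    set s := (2*R - t0)/2 with hs_def
    have hspos : 0 < s := by
      rcases (sub_nonneg.mpr ht02R).lt_or_eq with h | h
      · rw [hs_def]; linarith
      · exfalso
        have hz : ψ z0 = 0 := by
          simp only [hψ]
          rw [← ht0, ← h, zero_pow hnne, mul_zero]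
        linarith
    have hsR : s ≤ R := by rw [hs_def]; linarith
    have hψz0 : ψ z0 = X * (2*s)^n := by
      simp only [hψ, ← hX, ← ht0]
      congr 2
      rw [hs_def]; ring
    -- sup bound on ball z0 s
    have hMz : ∀ z ∈ ball z0 s, ‖f z‖ ≤ 2^n * X := by
      intro z hz
      have hzz0 : dist z z0 < s := mem_ball.mp hz
      have hdza : dist z a ≤ t0 + s := by
        have h6 := dist_triangle z z0 a
        rw [← ht0] at h6; linarith
      have hzK : z ∈ K := by
        rw [hK, mem_closedBall]
        have : t0 + s ≤ 2*R := by rw [hs_def]; linarith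
        linarith
      have h1 : s ≤ 2*R - dist z a := by
        rw [hs_def] at hzz0 ⊢
        linarith
      have h2 : ψ z ≤ ψ z0 := hz0max hzK
      have h3 : ‖f z‖ * s^n ≤ ψ z := by
        simp only [hψ]
        apply mul_le_mul_of_nonneg_left _ (norm_nonneg _)
        exact pow_le_pow_left₀ hspos.le h1 n
      have h5 : X * (2*s)^n = 2^n * X * s^n := by rw [mul_pow]; ring
      have h4 : ‖f z‖ * s^n ≤ 2^n * X * s^n := by linarith
      exact le_of_mul_le_mul_right h4 (pow_pos hspos n)
    -- pointwise power bound on ball z0 s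
    have hpt : ∀ z ∈ ball z0 s, ‖f z‖ ≤ (2^n * X)^(1-q) * ‖f z‖^q := by
      intro z hz
      have h0 : ‖f z‖ = ‖f z‖^(1-q) * ‖f z‖^q := by
        rw [← Real.rpow_add' (norm_nonneg _) (by rw [sub_add_cancel]; exact one_ne_zero),
          sub_add_cancel, Real.rpow_one]
      calc ‖f z‖ = ‖f z‖^(1-q) * ‖f z‖^q := h0
        _ ≤ (2^n * X)^(1-q) * ‖f z‖^q :=
            mul_le_mul_of_nonneg_right
              (Real.rpow_le_rpow (norm_nonneg _) (hMz z hz) (by linarith))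
              (Real.rpow_nonneg (norm_nonneg _) _)
    -- integral bound
    have hball_sub : ball z0 s ⊆ K := by
      intro z hz
      rw [hK, mem_closedBall]
      have hzz0 : dist z z0 < s := mem_ball.mp hz
      have h6 := dist_triangle z z0 a
      rw [← ht0] at h6
      rw [hs_def] at hzz0
      linarith
    have hint1 : (∫ z in ball z0 s, ‖f z‖) ≤ (2^n * X)^(1-q) * I := by
      calc (∫ z in ball z0 s, ‖f z‖)
          ≤ ∫ z in ball z0 s, (2^n * X)^(1-q) * ‖f z‖^q := by
            apply setIntegral_mono_on
            · exact (integrableOn_closedBall hf.continuous.norm z0 s).mono_set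
                ball_subset_closedBall
            · exact ((hIint.mono_set hball_sub).const_mul _)
            · exact measurableSet_ball
            · exact hpt
        _ = (2^n * X)^(1-q) * ∫ z in ball z0 s, ‖f z‖^q :=
            MeasureTheory.integral_const_mul _ _
        _ ≤ (2^n * X)^(1-q) * I := by
            apply mul_le_mul_of_nonneg_left _ (Real.rpow_nonneg (by positivity) _)
            apply setIntegral_mono_set hIint
            · exact Eventually.of_forall (fun z => Real.rpow_nonneg (norm_nonneg _) q)
            · exact HasSubset.Subset.eventuallyLE hball_sub
    -- submean
    have hsub : Real.pi * s^2 * X ≤ (2^n * X)^(1-q) * I :=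
      le_trans (area_submean hf z0 hspos) hint1
    -- cancel X^{1-q}
    have hXq : X^q * (Real.pi * s^2) ≤ ((2:ℝ)^n)^(1-q) * I := by
      have hXsplit : X = X^q * X^(1-q) := by
        have hqq : q + (1 - q) = 1 := by ring
        rw [← Real.rpow_add hXpos, hqq, Real.rpow_one]
      have hexp : ((2:ℝ)^n * X)^(1-q) = ((2:ℝ)^n)^(1-q) * X^(1-q) :=
        Real.mul_rpow (by positivity) hXpos.le
      have hX1q : 0 < X^(1-q) := Real.rpow_pos_of_pos hXpos _
      have h6 : (X^q * (Real.pi * s^2)) * X^(1-q) ≤ (((2:ℝ)^n)^(1-q) * I) * X^(1-q) := by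
        calc (X^q * (Real.pi * s^2)) * X^(1-q) = Real.pi * s^2 * (X^q * X^(1-q)) := by ring
          _ = Real.pi * s^2 * X := by rw [← hXsplit]
          _ ≤ (2^n * X)^(1-q) * I := hsub
          _ = (((2:ℝ)^n)^(1-q) * I) * X^(1-q) := by rw [hexp]; ring
      exact le_of_mul_le_mul_right h6 hX1q
    -- bound f a by maximality
    have hfa : ‖f a‖ * R^n ≤ X * s^n := by
      have h1 : ψ a = ‖f a‖ * (2^n * R^n) := by
        rw [hψaval, mul_pow]
      have h2 : ψ z0 = X * (2^n * s^n) := by rw [hψz0, mul_pow]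
      have h3 : ‖f a‖ * (2^n * R^n) ≤ X * (2^n * s^n) := by
        rw [← h1, ← h2]; exact hψa
      have h4 : (2:ℝ)^n * (‖f a‖ * R^n) ≤ 2^n * (X * s^n) := by
        calc (2:ℝ)^n * (‖f a‖ * R^n) = ‖f a‖ * (2^n * R^n) := by ring
          _ ≤ X * (2^n * s^n) := h3
          _ = 2^n * (X * s^n) := by ring
      exact le_of_mul_le_mul_left h4 (by positivity)
    -- key comparison
    have hsn : (0:ℝ) < s^n := pow_pos hspos n
    have hRn : (0:ℝ) < R^n := pow_pos hR n
    have hkey : ((s^n:ℝ))^q * R^2 ≤ ((R^n:ℝ))^q * s^2 := by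
      have e1 : ((s^n:ℝ))^q = s^((n:ℝ)*q) := by
        rw [Real.rpow_mul hspos.le, Real.rpow_natCast]
      have e2 : ((R^n:ℝ))^q = R^((n:ℝ)*q) := by
        rw [Real.rpow_mul hR.le, Real.rpow_natCast]
      have e3 : ∀ x : ℝ, 0 < x → x^((n:ℝ)*q) = x^((n:ℝ)*q - 2) * x^2 := by
        intro x hx
        rw [← Real.rpow_natCast x 2, ← Real.rpow_add hx]
        norm_num
      rw [e1, e2, e3 s hspos, e3 R hR]
      have h7 : s^((n:ℝ)*q-2) ≤ R^((n:ℝ)*q-2) :=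
        Real.rpow_le_rpow hspos.le hsR (by linarith)
      have hs2 : (0:ℝ) ≤ s^2 := sq_nonneg s
      have hR2 : (0:ℝ) ≤ R^2 := sq_nonneg R
      calc s^((n:ℝ)*q-2) * s^2 * R^2 ≤ R^((n:ℝ)*q-2) * s^2 * R^2 :=
            mul_le_mul_of_nonneg_right (mul_le_mul_of_nonneg_right h7 hs2) hR2
        _ = R^((n:ℝ)*q-2) * R^2 * s^2 := by ring
    -- final assembly
    have hfaq : ‖f a‖^q * ((R^n:ℝ))^q ≤ X^q * ((s^n:ℝ))^q := by
      rw [← Real.mul_rpow (norm_nonneg _) hRn.le,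
        ← Real.mul_rpow hXpos.le hsn.le]
      exact Real.rpow_le_rpow (mul_nonneg (norm_nonneg _) hRn.le) hfa hq0.le
    have hBle : ((2:ℝ)^n)^(1-q) ≤ (2:ℝ)^n := by
      have h8 : (1:ℝ) ≤ (2:ℝ)^n := one_le_pow₀ (by norm_num)
      calc ((2:ℝ)^n)^(1-q) ≤ ((2:ℝ)^n)^(1:ℝ) :=
            Real.rpow_le_rpow_of_exponent_le h8 (by linarith)
        _ = (2:ℝ)^n := Real.rpow_one _
    have hs2 : (0:ℝ) < s^2 := pow_pos hspos 2
    have hRnq : (0:ℝ) < ((R^n:ℝ))^q := Real.rpow_pos_of_pos hRn _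
    have hsnqnn : (0:ℝ) ≤ ((s^n:ℝ))^q := (Real.rpow_pos_of_pos hsn q).le
    have hfaqnn : (0:ℝ) ≤ ‖f a‖^q := Real.rpow_nonneg (norm_nonneg _) q
    have hXqnn : (0:ℝ) ≤ X^q := (Real.rpow_pos_of_pos hXpos q).le
    have main : (‖f a‖^q * (Real.pi * R^2)) * (((R^n:ℝ))^q * s^2)
        ≤ ((2:ℝ)^n * I) * (((R^n:ℝ))^q * s^2) := by
      calc (‖f a‖^q * (Real.pi * R^2)) * (((R^n:ℝ))^q * s^2)
          = (‖f a‖^q * ((R^n:ℝ))^q) * ((Real.pi * s^2) * R^2) := by ring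
        _ ≤ (X^q * ((s^n:ℝ))^q) * ((Real.pi * s^2) * R^2) := by
            apply mul_le_mul_of_nonneg_right hfaq
            have := Real.pi_pos
            apply mul_nonneg (mul_nonneg (le_of_lt this) hs2.le) (sq_nonneg R)
        _ = (X^q * (Real.pi * s^2)) * (((s^n:ℝ))^q * R^2) := by ring
        _ ≤ (((2:ℝ)^n)^(1-q) * I) * (((R^n:ℝ))^q * s^2) := by
            apply mul_le_mul hXq hkey
            · apply mul_nonneg hsnqnn (sq_nonneg R)
            · apply mul_nonneg (Real.rpow_nonneg (by positivity) _) hInn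
        _ ≤ ((2:ℝ)^n * I) * (((R^n:ℝ))^q * s^2) := by
            apply mul_le_mul_of_nonneg_right _ (mul_nonneg hRnq.le hs2.le)
            exact mul_le_mul_of_nonneg_right hBle hInn
    exact le_of_mul_le_mul_right main (mul_pos hRnq hs2)

lemma core_holder (hf : Differentiable ℂ f) {p : ℝ} (hp : 1 < p) (a : ℂ) {R : ℝ} (hR : 0 < R) :
    ‖f a‖ ^ p * (Real.pi * R ^ 2) ≤ ∫ z in closedBall a (2*R), ‖f z‖ ^ p := by
  set q := Real.conjExponent p with hq
  have hpq : p.HolderConjugate q := Real.HolderConjugate.conjExponent hp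
  set μ := volume.restrict (ball a R) with hμ
  have hfin : IsFiniteMeasure μ := by
    constructor
    rw [hμ, Measure.restrict_apply_univ]
    exact measure_ball_lt_top
  have hπR : (0:ℝ) < Real.pi * R^2 := by positivity
  have hμuniv : (μ univ).toReal = Real.pi * R^2 := by
    rw [hμ, Measure.restrict_apply_univ]
    exact vol_ball_toReal a hR
  -- boundedness of f on the closed ball
  obtain ⟨M, hM⟩ : ∃ M, ∀ z ∈ closedBall a R, ‖f z‖ ≤ M := by
    rcases (isCompact_closedBall a R).exists_bound_of_continuousOn
      hf.continuous.norm.continuousOn with ⟨M, hM⟩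
    exact ⟨M, fun z hz => by simpa using hM z hz⟩
  have hmeas : AEStronglyMeasurable (fun z : ℂ => ‖f z‖) μ :=
    hf.continuous.norm.aestronglyMeasurable
  have hmemp : MemLp (fun z : ℂ => ‖f z‖) (ENNReal.ofReal p) μ := by
    apply MemLp.of_bound hmeas M
    rw [hμ, ae_restrict_iff' measurableSet_ball]
    exact Eventually.of_forall fun z hz => by
      rw [norm_norm]; exact hM z (ball_subset_closedBall hz)
  have hmemq : MemLp (fun _ : ℂ => (1:ℝ)) (ENNReal.ofReal q) μ := memLp_const 1
  have hHolder := integral_mul_le_Lp_mul_Lq_of_nonneg hpq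
    (Eventually.of_forall fun z => norm_nonneg (f z))
    (Eventually.of_forall fun z => zero_le_one) hmemp hmemq
  simp only [mul_one, Real.one_rpow] at hHolder
  have hconst : (∫ _ : ℂ, (1:ℝ) ∂μ) = Real.pi * R^2 := by
    rw [integral_const, smul_eq_mul, mul_one, measureReal_def, hμuniv]
  rw [hconst] at hHolder
  -- hHolder : ∫ ‖f‖ ∂μ ≤ (∫ ‖f‖^p ∂μ)^(1/p) * (π R²)^(1/q)
  set A := ∫ z, ‖f z‖^p ∂μ with hA
  have hAnn : 0 ≤ A := integral_nonneg fun z => Real.rpow_nonneg (norm_nonneg _) p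
  have hsub : Real.pi * R^2 * ‖f a‖ ≤ ∫ z, ‖f z‖ ∂μ := area_submean hf a hR
  have hmain : ‖f a‖ * (Real.pi * R^2) ≤ A^(1/p) * (Real.pi * R^2)^(1/q) := by
    calc ‖f a‖ * (Real.pi * R^2) = Real.pi * R^2 * ‖f a‖ := by ring
      _ ≤ ∫ z, ‖f z‖ ∂μ := hsub
      _ ≤ A^(1/p) * (Real.pi * R^2)^(1/q) := hHolder
  -- raise to the p-th power
  have hp0 : (0:ℝ) < p := hpq.pos
  have hlhs : (0:ℝ) ≤ ‖f a‖ * (Real.pi * R^2) := mul_nonneg (norm_nonneg _) hπR.le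
  have hpow := Real.rpow_le_rpow hlhs hmain hp0.le
  rw [Real.mul_rpow (norm_nonneg _) hπR.le,
    Real.mul_rpow (Real.rpow_nonneg hAnn _) (Real.rpow_nonneg hπR.le _)] at hpow
  have e1 : (A^(1/p))^p = A := by
    rw [← Real.rpow_mul hAnn, one_div_mul_cancel hp0.ne', Real.rpow_one]
  have e2 : ((Real.pi * R^2)^(1/q))^p = (Real.pi * R^2)^(p-1) := by
    rw [← Real.rpow_mul hπR.le]
    congr 1
    rw [hq, Real.conjExponent]
    field_simp
  have e3 : (Real.pi * R^2)^p = (Real.pi * R^2)^(p-1) * (Real.pi * R^2) := by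
    nth_rewrite 3 [← Real.rpow_one (Real.pi * R^2)]
    rw [← Real.rpow_add hπR]
    congr 1
    ring
  rw [e1, e2, e3] at hpow
  have hcancel : ‖f a‖^p * (Real.pi * R^2) ≤ A := by
    have h1 : (‖f a‖^p * (Real.pi * R^2)) * (Real.pi * R^2)^(p-1)
        ≤ A * (Real.pi * R^2)^(p-1) := by
      calc (‖f a‖^p * (Real.pi * R^2)) * (Real.pi * R^2)^(p-1)
          = ‖f a‖^p * ((Real.pi * R^2)^(p-1) * (Real.pi * R^2)) := by ring
        _ ≤ A * (Real.pi * R^2)^(p-1) := hpow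
    exact le_of_mul_le_mul_right h1 (Real.rpow_pos_of_pos hπR _)
  refine hcancel.trans ?_
  rw [hA, hμ]
  apply setIntegral_mono_set
  · exact integrableOn_closedBall
      (hf.continuous.norm.rpow_const (fun z => Or.inr (by linarith))) a (2*R)
  · exact Eventually.of_forall (fun z => Real.rpow_nonneg (norm_nonneg _) p)
  · apply HasSubset.Subset.eventuallyLE
    exact ball_subset_closedBall.trans (closedBall_subset_closedBall (by linarith))

lemma core (hf : Differentiable ℂ f) {p : ℝ} (hp : 0 < p) :
    ∃ C : ℝ, 0 < C ∧ ∀ (a : ℂ) (R : ℝ), 0 < R →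
      ‖f a‖ ^ p * R ^ 2 ≤ C * ∫ z in closedBall a (2*R), ‖f z‖ ^ p := by
  have hπ : (0:ℝ) < Real.pi := Real.pi_pos
  rcases le_or_gt p 1 with h1 | h1
  · set n := ⌈(2:ℝ)/p⌉₊ + 2 with hn
    have hnp : (2:ℝ) ≤ (n:ℝ) * p := by
      have h2 := Nat.le_ceil ((2:ℝ)/p)
      have h3 : ((⌈(2:ℝ)/p⌉₊ : ℝ)) ≤ (n:ℝ) := by rw [hn]; push_cast; linarith
      calc (2:ℝ) = (2/p) * p := by field_simp
        _ ≤ (n:ℝ) * p := mul_le_mul_of_nonneg_right (h2.trans h3) hp.le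
    refine ⟨2^n / Real.pi, by positivity, fun a R hR => ?_⟩
    have hq := core_q hf hp h1 n hnp a hR
    have e0 : ‖f a‖^p * R^2 = (‖f a‖^p * (Real.pi * R^2))/Real.pi := by
      field_simp
    rw [e0]
    calc (‖f a‖^p * (Real.pi * R^2))/Real.pi
        ≤ (2^n * ∫ z in closedBall a (2*R), ‖f z‖ ^ p)/Real.pi :=
          (div_le_div_iff_of_pos_right hπ).mpr hq
      _ = 2^n/Real.pi * ∫ z in closedBall a (2*R), ‖f z‖ ^ p := by ring
  · refine ⟨1 / Real.pi, by positivity, fun a R hR => ?_⟩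
    have hq := core_holder hf h1 a hR
    have e0 : ‖f a‖^p * R^2 = (‖f a‖^p * (Real.pi * R^2))/Real.pi := by
      field_simp
    rw [e0]
    calc (‖f a‖^p * (Real.pi * R^2))/Real.pi
        ≤ (∫ z in closedBall a (2*R), ‖f z‖ ^ p)/Real.pi :=
          (div_le_div_iff_of_pos_right hπ).mpr hq
      _ = 1/Real.pi * ∫ z in closedBall a (2*R), ‖f z‖ ^ p := by ring
lemma growth (hf : Differentiable ℂ f) {p : ℝ} (hp : 0 < p) (m : ℕ)
    (hint : Integrable
      (fun z : ℂ => ‖f z‖ ^ p * (1 + psi' m ‖z‖) ^ (-p)) volume) :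
    ∃ B : ℝ, 0 < B ∧ ∀ a : ℂ, 2*(m:ℝ)+2 ≤ ‖a‖ →
      ‖f a‖ ≤ B * ‖a‖ ^ ((p - 2)/p) := by
  obtain ⟨C, hC, hcore⟩ := core hf hp
  set h : ℂ → ℝ := fun z => ‖f z‖ ^ p * (1 + psi' m ‖z‖) ^ (-p) with hh
  set K := ∫ z, ‖h z‖ with hKdef
  have hK0 : 0 ≤ K := integral_nonneg fun z => norm_nonneg _
  have h3p : (0:ℝ) < 3^p := Real.rpow_pos_of_pos (by norm_num) p
  set B₀ : ℝ := 16 * C * 3^p * (K+1) with hB₀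
  have hB₀pos : 0 < B₀ := by
    have hK1 : (0:ℝ) < K + 1 := by linarith
    positivity
  refine ⟨B₀^(1/p), Real.rpow_pos_of_pos hB₀pos _, fun a ha => ?_⟩
  set r := ‖a‖ with hr
  have hm0 : (0:ℝ) ≤ (m:ℝ) := Nat.cast_nonneg m
  have hr2 : (2:ℝ) ≤ r := by linarith
  have hr0 : (0:ℝ) < r := by linarith
  have hR : (0:ℝ) < r/4 := by linarith
  -- pointwise estimate on the ball
  have hpt : ∀ z ∈ closedBall a (2*(r/4)), ‖f z‖^p ≤ (3*r)^p * ‖h z‖ := by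
    intro z hz
    have hdist : dist z a ≤ r/2 := by
      have := mem_closedBall.mp hz; linarith
    have hlb : r/2 ≤ ‖z‖ := by
      have h1 : dist a 0 ≤ dist a z + dist z 0 := dist_triangle a z 0
      rw [dist_zero_right, dist_zero_right, dist_comm a z] at h1
      rw [← hr] at *
      linarith
    have hub : ‖z‖ ≤ 3*r/2 := by
      have h1 : dist z 0 ≤ dist z a + dist a 0 := dist_triangle z a 0
      rw [dist_zero_right, dist_zero_right] at h1
      linarith
    have hmz : (m:ℝ) ≤ ‖z‖ := by linarith
    obtain ⟨w1, w2⟩ := weight_bounds m hmz (norm_nonneg z)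
    have hw_pos : 0 < 1 + psi' m ‖z‖ := by linarith
    have hw_ub : 1 + psi' m ‖z‖ ≤ 3*r := by linarith
    have hrpow : (3*r)^(-p) ≤ (1 + psi' m ‖z‖)^(-p) :=
      Real.rpow_le_rpow_of_nonpos hw_pos hw_ub (neg_nonpos.mpr hp.le)
    have hfzp : (0:ℝ) ≤ ‖f z‖^p := Real.rpow_nonneg (norm_nonneg _) p
    have hle : ‖f z‖^p * (3*r)^(-p) ≤ ‖h z‖ := by
      calc ‖f z‖^p * (3*r)^(-p) ≤ ‖f z‖^p * (1 + psi' m ‖z‖)^(-p) :=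
            mul_le_mul_of_nonneg_left hrpow hfzp
        _ = h z := by rw [hh]
        _ ≤ ‖h z‖ := by rw [Real.norm_eq_abs]; exact le_abs_self _
    have h3r : (0:ℝ) < 3*r := by linarith
    have e0 : (3*r)^(-p) * (3*r)^p = 1 := by
      rw [← Real.rpow_add h3r, neg_add_cancel, Real.rpow_zero]
    calc ‖f z‖^p = ‖f z‖^p * ((3*r)^(-p) * (3*r)^p) := by rw [e0, mul_one]
      _ = (‖f z‖^p * (3*r)^(-p)) * (3*r)^p := by ring
      _ ≤ ‖h z‖ * (3*r)^p :=
          mul_le_mul_of_nonneg_right hle (Real.rpow_nonneg h3r.le _)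
      _ = (3*r)^p * ‖h z‖ := mul_comm _ _
  have hfp_cont : Continuous fun z : ℂ => ‖f z‖^p :=
    hf.continuous.norm.rpow_const (fun z => Or.inr hp.le)
  have h3r0 : (0:ℝ) ≤ (3*r)^p := Real.rpow_nonneg (by linarith) _
  have hIB : (∫ z in closedBall a (2*(r/4)), ‖f z‖^p) ≤ (3*r)^p * K := by
    calc (∫ z in closedBall a (2*(r/4)), ‖f z‖^p)
        ≤ ∫ z in closedBall a (2*(r/4)), (3*r)^p * ‖h z‖ := by
          apply setIntegral_mono_on (integrableOn_closedBall hfp_cont a _)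
            ((hint.norm.integrableOn).const_mul _) measurableSet_closedBall hpt
      _ = (3*r)^p * ∫ z in closedBall a (2*(r/4)), ‖h z‖ :=
          MeasureTheory.integral_const_mul _ _
      _ ≤ (3*r)^p * K := by
          apply mul_le_mul_of_nonneg_left _ h3r0
          exact setIntegral_le_integral hint.norm
            (Eventually.of_forall fun z => norm_nonneg _)
  have h1 : ‖f a‖^p * (r/4)^2 ≤ C * ((3*r)^p * K) :=
    (hcore a (r/4) hR).trans (mul_le_mul_of_nonneg_left hIB hC.le)
  -- conclude
  have hr2pos : (0:ℝ) < r^2 := by positivity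
  have e1 : (3*r)^p = 3^p * r^p := Real.mul_rpow (by norm_num) hr0.le
  have e2 : r^(p-2) * r^2 = r^p := by
    rw [← Real.rpow_natCast r 2, ← Real.rpow_add hr0]
    norm_num
  have key : ‖f a‖^p * r^2 ≤ B₀ * (r^(p-2) * r^2) := by
    rw [e2]
    have h3 : ‖f a‖^p * r^2 = 16 * (‖f a‖^p * (r/4)^2) := by ring
    rw [h3]
    calc 16 * (‖f a‖^p * (r/4)^2) ≤ 16 * (C * ((3*r)^p * K)) := by linarith
      _ = 16 * C * 3^p * K * r^p := by rw [e1]; ring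
      _ ≤ B₀ * r^p := by
          rw [hB₀]
          apply mul_le_mul_of_nonneg_right _ (Real.rpow_nonneg hr0.le p)
          nlinarith
  have h2 : ‖f a‖^p ≤ B₀ * r^(p-2) := by
    have := (div_le_div_iff_of_pos_right hr2pos).mpr key
    calc ‖f a‖^p = (‖f a‖^p * r^2)/r^2 := by field_simp
      _ ≤ (B₀ * (r^(p-2) * r^2))/r^2 := this
      _ = B₀ * r^(p-2) := by field_simp
  have e3 : ‖f a‖ = (‖f a‖^p)^(1/p) := by
    rw [one_div, Real.rpow_rpow_inv (norm_nonneg _) hp.ne']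
  rw [e3]
  calc (‖f a‖^p)^(1/p) ≤ (B₀ * r^(p-2))^(1/p) :=
        Real.rpow_le_rpow (Real.rpow_nonneg (norm_nonneg _) p) h2 (by positivity)
    _ = B₀^(1/p) * (r^(p-2))^(1/p) :=
        Real.mul_rpow hB₀pos.le (Real.rpow_nonneg hr0.le _)
    _ = B₀^(1/p) * r^((p-2)/p) := by
        rw [← Real.rpow_mul hr0.le]
        congr 1
        rw [mul_one_div]

lemma tendsto_zero_of_bound {g : ℂ → ℂ} {B e r1 : ℝ} (he : e < 0)
    (hb : ∀ z : ℂ, r1 ≤ ‖z‖ → ‖g z‖ ≤ B * ‖z‖ ^ e) :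
    Tendsto g (cocompact ℂ) (𝓝 0) := by
  rw [← cobounded_eq_cocompact]
  apply squeeze_zero_norm' ((tendsto_norm_cobounded_atTop.eventually_ge_atTop r1).mono hb)
  have h1 : Tendsto (fun x : ℝ => B * x^e) atTop (𝓝 (B*0)) := by
    apply Tendsto.const_mul B
    have := tendsto_rpow_neg_atTop (y := -e) (by linarith)
    simpa [neg_neg] using this
  rw [mul_zero] at h1
  exact h1.comp tendsto_norm_cobounded_atTop

-- case p > 2 : f is constant
lemma const_of_growth (hf : Differentiable ℂ f) {B e r1 : ℝ} (he0 : 0 ≤ e) (he1 : e < 1)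
    (hb : ∀ z : ℂ, r1 ≤ ‖z‖ → ‖f z‖ ≤ B * ‖z‖ ^ e) :
    ∀ z : ℂ, f z = f 0 := by
  set F : ℂ → ℂ := dslope f 0 with hF
  have hFd : Differentiable ℂ F := by
    rw [← differentiableOn_univ]
    exact (Complex.differentiableOn_dslope (univ_mem)).mpr hf.differentiableOn
  have hBnn : 0 ≤ B := by
    have h1 := hb (Complex.ofReal (max r1 1 + 1)) ?_
    · have h2 : (0:ℝ) ≤ ‖f (Complex.ofReal (max r1 1 + 1))‖ := norm_nonneg _
      have h3 : 0 < ‖(Complex.ofReal (max r1 1 + 1))‖ ^ e := by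
        apply Real.rpow_pos_of_pos
        rw [Complex.norm_real, Real.norm_eq_abs]
        have := le_max_right r1 1
        rw [abs_of_pos (by linarith)]
        linarith
      nlinarith
    · rw [Complex.norm_real, Real.norm_eq_abs]
      have h4 := le_max_left r1 1
      have := le_max_right r1 1
      rw [abs_of_pos (by linarith)]
      linarith
  have hbF : ∀ z : ℂ, max r1 1 ≤ ‖z‖ → ‖F z‖ ≤ (B + ‖f 0‖) * ‖z‖ ^ (e - 1) := by
    intro z hz
    have hz1 : (1:ℝ) ≤ ‖z‖ := le_trans (le_max_right r1 1) hz
    have hz0 : z ≠ 0 := by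
      intro h; rw [h] at hz1; simp at hz1; linarith
    have hzpos : (0:ℝ) < ‖z‖ := by linarith
    have hFz : ‖F z‖ = ‖z‖⁻¹ * ‖f z - f 0‖ := by
      rw [hF, dslope_of_ne f hz0, slope_def_module]
      rw [norm_smul, norm_inv, sub_zero]
    have hone_le : (1:ℝ) ≤ ‖z‖ ^ e := Real.one_le_rpow hz1 he0
    have hupper : ‖f z - f 0‖ ≤ (B + ‖f 0‖) * ‖z‖ ^ e := by
      calc ‖f z - f 0‖ ≤ ‖f z‖ + ‖f 0‖ := norm_sub_le _ _
        _ ≤ B * ‖z‖ ^ e + ‖f 0‖ * ‖z‖ ^ e := by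
            have := hb z (le_trans (le_max_left r1 1) hz)
            have h5 : ‖f 0‖ ≤ ‖f 0‖ * ‖z‖ ^ e := le_mul_of_one_le_right (norm_nonneg _) hone_le
            linarith
        _ = (B + ‖f 0‖) * ‖z‖ ^ e := by ring
    rw [hFz]
    calc ‖z‖⁻¹ * ‖f z - f 0‖ ≤ ‖z‖⁻¹ * ((B + ‖f 0‖) * ‖z‖ ^ e) := by
          apply mul_le_mul_of_nonneg_left hupper (inv_nonneg.mpr (norm_nonneg _))
      _ = (B + ‖f 0‖) * ‖z‖ ^ (e - 1) := by
          rw [Real.rpow_sub hzpos, Real.rpow_one]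
          field_simp
  have hFtend : Tendsto F (cocompact ℂ) (𝓝 0) :=
    tendsto_zero_of_bound (by linarith) hbF
  have hF0 : ∀ z : ℂ, F z = 0 := fun z => hFd.apply_eq_of_tendsto_cocompact z hFtend
  intro z
  rcases eq_or_ne z 0 with rfl | hz
  · rfl
  · have := hF0 z
    rw [hF, dslope_of_ne f hz, slope_def_module, smul_eq_zero] at this
    rcases this with h | h
    · exfalso; exact hz (by simpa using inv_eq_zero.mp h)
    · rw [sub_eq_zero] at h; exact h

-- divergence for p ≤ 2
lemma const_eq_zero (m : ℕ) {p : ℝ} (hp : 0 < p) (hp2 : p ≤ 2) {c : ℂ}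
    (hint : Integrable
      (fun z : ℂ => ‖c‖ ^ p * (1 + psi' m ‖z‖) ^ (-p)) volume) :
    c = 0 := by
  by_contra hc
  set h : ℂ → ℝ := fun z => ‖c‖ ^ p * (1 + psi' m ‖z‖) ^ (-p) with hh
  have hε : 0 < ‖c‖ ^ p := Real.rpow_pos_of_pos (norm_pos_iff.mpr hc) p
  set ε := ‖c‖ ^ p with hεdef
  set T : ℝ := (m:ℝ) + 1 with hT
  have hm0 : (0:ℝ) ≤ (m:ℝ) := Nat.cast_nonneg m
  have hT1 : (1:ℝ) ≤ T := by rw [hT]; linarith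
  have hT0 : (0:ℝ) < T := by linarith
  set δ : ℝ := ε * Real.pi / 64 with hδ
  have hδpos : 0 < δ := by
    have := Real.pi_pos
    rw [hδ]; positivity
  set K := ∫ z, ‖h z‖ with hKdef
  have hvol : ∀ (a : ℂ) {R : ℝ}, 0 < R → (volume (ball a R)).toReal = Real.pi * R^2 := by
    intro a R hR
    rw [Complex.volume_ball, ENNReal.toReal_mul, ENNReal.toReal_pow,
      ENNReal.toReal_ofReal hR.le, ENNReal.coe_toReal, NNReal.coe_real_pi]
    ring
  set Bk : ℕ → Set ℂ := fun k => ball (((3 * (2^k * T) / 2 : ℝ) : ℂ)) (2^k * T / 2) with hBk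
  have hu0 : ∀ k : ℕ, (0:ℝ) < 2^k * T := fun k => by positivity
  have hu1 : ∀ k : ℕ, (1:ℝ) ≤ 2^k * T := by
    intro k
    calc (1:ℝ) = 1 * 1 := by norm_num
      _ ≤ 2^k * T := mul_le_mul (one_le_pow₀ (by norm_num)) hT1 (by norm_num) (by positivity)
  have hmem : ∀ (k : ℕ), ∀ z ∈ Bk k, 2^k * T < ‖z‖ ∧ ‖z‖ < 2 * (2^k * T) := by
    intro k z hz
    set u : ℝ := 2^k * T with hu
    have hu0' : (0:ℝ) < u := hu0 k
    have hd : dist z ((3 * u / 2 : ℝ) : ℂ) < u/2 := mem_ball.mp hz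
    have hcn : ‖(((3 * u / 2 : ℝ)) : ℂ)‖ = 3*u/2 := by
      rw [Complex.norm_real, Real.norm_eq_abs, abs_of_pos (by linarith)]
    constructor
    · have h1 : dist ((3 * u / 2 : ℝ) : ℂ) 0 ≤ dist ((3 * u / 2 : ℝ) : ℂ) z + dist z 0 :=
        dist_triangle _ _ _
      rw [dist_zero_right, dist_zero_right, hcn, dist_comm] at h1
      linarith
    · have h1 : dist z 0 ≤ dist z ((3 * u / 2 : ℝ) : ℂ) + dist ((3 * u / 2 : ℝ) : ℂ) 0 :=
        dist_triangle _ _ _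
      rw [dist_zero_right, dist_zero_right, hcn] at h1
      linarith
  -- per-ball estimate
  have hball : ∀ k : ℕ, δ ≤ ∫ z in Bk k, ‖h z‖ := by
    intro k
    set u : ℝ := 2^k * T with hu
    have hu0' : (0:ℝ) < u := hu0 k
    have hu1' : (1:ℝ) ≤ u := hu1 k
    have h4u : (0:ℝ) < 4*u := by linarith
    have hptwise : ∀ z ∈ Bk k, ε * ((4*u)^2)⁻¹ ≤ ‖h z‖ := by
      intro z hz
      obtain ⟨hzl, hzu⟩ := hmem k z hz
      have hTu : T ≤ u := by
        rw [hu]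
        nlinarith [one_le_pow₀ (show (1:ℝ) ≤ 2 by norm_num) (n := k)]
      have hmz : (m:ℝ) ≤ ‖z‖ := by rw [hT] at hTu; linarith
      obtain ⟨w1, w2⟩ := weight_bounds m hmz (norm_nonneg z)
      have hw_pos : 0 < 1 + psi' m ‖z‖ := by linarith
      have hw_ub : 1 + psi' m ‖z‖ ≤ 4*u := by linarith
      have s1 : (4*u)^(-p) ≤ (1 + psi' m ‖z‖)^(-p) :=
        Real.rpow_le_rpow_of_nonpos hw_pos hw_ub (neg_nonpos.mpr hp.le)
      have s2 : (4*u)^(-(2:ℝ)) ≤ (4*u)^(-p) :=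
        Real.rpow_le_rpow_of_exponent_le (by linarith) (by linarith)
      have s3 : (4*u)^(-(2:ℝ)) = ((4*u)^2)⁻¹ := by
        rw [Real.rpow_neg h4u.le, ← Real.rpow_natCast (4*u) 2]
        norm_num
      calc ε * ((4*u)^2)⁻¹ = ε * (4*u)^(-(2:ℝ)) := by rw [s3]
        _ ≤ ε * (1 + psi' m ‖z‖)^(-p) :=
            mul_le_mul_of_nonneg_left (le_trans s2 s1) hε.le
        _ = h z := by rw [hh]
        _ ≤ ‖h z‖ := by rw [Real.norm_eq_abs]; exact le_abs_self _
    have hconst : (∫ _ in Bk k, ε * ((4*u)^2)⁻¹) = Real.pi * (u/2)^2 * (ε * ((4*u)^2)⁻¹) := by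
      rw [setIntegral_const, smul_eq_mul, hBk]
      congr 1
      have h9 : (0:ℝ) < 2^k * T / 2 := by
        rw [hT]; positivity
      exact hvol _ h9
    have heq : Real.pi * (u/2)^2 * (ε * ((4*u)^2)⁻¹) = δ := by
      rw [hδ]
      field_simp
      ring
    calc δ = ∫ _ in Bk k, ε * ((4*u)^2)⁻¹ := by rw [hconst, heq]
      _ ≤ ∫ z in Bk k, ‖h z‖ := by
          apply setIntegral_mono_on
          · exact integrableOn_const measure_ball_lt_top.ne
          · exact hint.norm.integrableOn
          · exact measurableSet_ball
          · exact hptwise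
  -- disjointness
  have hdisj : ∀ k j : ℕ, k < j → Disjoint (Bk k) (Bk j) := by
    intro k j hkj
    rw [Set.disjoint_left]
    intro z hzk hzj
    have h1 := (hmem k z hzk).2
    have h2 := (hmem j z hzj).1
    have h3 : (2:ℝ) * (2^k * T) ≤ 2^j * T := by
      have : (2:ℝ)^(k+1) ≤ 2^j := pow_le_pow_right₀ (by norm_num) hkj
      rw [pow_succ] at this
      nlinarith
    linarith
  -- summation
  obtain ⟨N, hN⟩ := exists_nat_gt (K/δ)
  have hsum : (N:ℝ) * δ ≤ K := by
    have h1 : (∫ z in ⋃ k ∈ Finset.range N, Bk k, ‖h z‖)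
        = ∑ k ∈ Finset.range N, ∫ z in Bk k, ‖h z‖ := by
      apply integral_biUnion_finset
      · exact fun i _ => measurableSet_ball
      · intro i _ j _ hij
        rcases lt_or_gt_of_ne hij with h | h
        · exact hdisj i j h
        · exact (hdisj j i h).symm
      · exact fun i _ => hint.norm.integrableOn
    have h2 : (N:ℝ) * δ ≤ ∑ k ∈ Finset.range N, ∫ z in Bk k, ‖h z‖ := by
      calc (N:ℝ) * δ = ∑ _k ∈ Finset.range N, δ := by
            rw [Finset.sum_const, Finset.card_range, nsmul_eq_mul]
        _ ≤ ∑ k ∈ Finset.range N, ∫ z in Bk k, ‖h z‖ :=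
            Finset.sum_le_sum fun k _ => hball k
    have h3 : (∫ z in ⋃ k ∈ Finset.range N, Bk k, ‖h z‖) ≤ K := by
      rw [hKdef]
      exact setIntegral_le_integral hint.norm (Eventually.of_forall fun z => norm_nonneg _)
    linarith
  have : K < (N:ℝ) * δ := by
    rw [div_lt_iff₀ hδpos] at hN
    linarith
  linarith
end Stmt11Aux

open Stmt11Aux Metric Set Filter Bornology MeasureTheory

/-- If g is entire and ∫_ℂ |g'(z)|^p (1+ψ_m'(|z|))^{−p} dA(z) < ∞, then g' is constant
when p > 2, and g' ≡ 0 when 0 < p ≤ 2. -/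
theorem stmt_11 (m : ℕ) (p : ℝ) (hp : 0 < p) (g : ℂ → ℂ) (hg : Differentiable ℂ g)
    (hint : Integrable
      (fun z : ℂ => ‖deriv g z‖ ^ p * (1 + psi' m (‖z‖)) ^ (-p))
      volume) :
    (2 < p → ∃ c : ℂ, ∀ z : ℂ, deriv g z = c) ∧
    (p ≤ 2 → ∀ z : ℂ, deriv g z = 0) := by
  have hganal : AnalyticOnNhd ℂ g univ := Complex.analyticOnNhd_univ_iff_differentiable.mpr hg
  have hf : Differentiable ℂ (deriv g) := Complex.analyticOnNhd_univ_iff_differentiable.mp hganal.deriv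
  set f : ℂ → ℂ := deriv g with hfdef
  have hint' : Integrable (fun z : ℂ => ‖f z‖ ^ p * (1 + psi' m ‖z‖) ^ (-p)) volume := by
    exact hint
  obtain ⟨B, hB, hgrow⟩ := growth hf hp m hint'
  have hm0 : (0:ℝ) ≤ (m:ℝ) := Nat.cast_nonneg m
  constructor
  · -- p > 2 : f constant
    intro hp2
    refine ⟨f 0, fun z => ?_⟩
    apply const_of_growth hf (r1 := 2*(m:ℝ)+2) (e := (p-2)/p)
      (div_nonneg (by linarith) hp.le) ?_ hgrow
    rw [div_lt_one hp]
    linarith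
  · -- p ≤ 2 : f ≡ 0
    intro hp2
    have he : (p-2)/p ≤ 0 := div_nonpos_of_nonpos_of_nonneg (by linarith) hp.le
    obtain ⟨M, hM⟩ := (isCompact_closedBall (0:ℂ) (2*(m:ℝ)+2)).exists_bound_of_continuousOn
      hf.continuous.continuousOn
    have hbd : IsBounded (range f) := by
      rw [isBounded_iff_forall_norm_le]
      refine ⟨max B M, ?_⟩
      rintro w ⟨z, rfl⟩
      rcases le_or_gt (2*(m:ℝ)+2) ‖z‖ with hz | hz
      · have h1 := hgrow z hz
        have h2 : ‖z‖ ^ ((p-2)/p) ≤ 1 :=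
          Real.rpow_le_one_of_one_le_of_nonpos (by linarith) he
        have h3 : B * ‖z‖ ^ ((p-2)/p) ≤ B * 1 :=
          mul_le_mul_of_nonneg_left h2 hB.le
        calc ‖f z‖ ≤ B * 1 := by linarith
          _ = B := mul_one B
          _ ≤ max B M := le_max_left B M
      · have hmem : z ∈ closedBall (0:ℂ) (2*(m:ℝ)+2) := by
          rw [mem_closedBall_zero_iff]; linarith
        exact le_trans (hM z hmem) (le_max_right B M)
    have hconst : ∀ z : ℂ, f z = f 0 := fun z => hf.apply_eq_apply_of_bounded hbd z 0
    have hint'' : Integrable (fun z : ℂ => ‖f 0‖ ^ p * (1 + psi' m ‖z‖) ^ (-p)) volume := by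
      have : (fun z : ℂ => ‖f z‖ ^ p * (1 + psi' m ‖z‖) ^ (-p))
          = fun z : ℂ => ‖f 0‖ ^ p * (1 + psi' m ‖z‖) ^ (-p) :=
        funext fun z => by rw [hconst z]
      rwa [this] at hint'
    have hzero : f 0 = 0 := const_eq_zero m hp hp2 hint''
    intro z
    rw [hconst z, hzero]
end
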